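/- arXiv:2412.20401 — 3 statements merged into one kernel-verified Lean document; each statement's English description precedes it below -/
import Mathlib

section
/- In an ω-poset P, two elements p, q are adjacent (p ⌅ q, meaning for every cap C there exists c ∈ C with p ∧ c and c ∧ q) if and only if the closed sets {S ∈ SP : S ⊆ p^∧} and {S ∈ SP : S ⊆ q^∧} have non-empty intersection. -/
namespace OP

section OmegaPoset

variable (P : Type*) [PartialOrder P]

/-- The n-th cone of the poset: `cone 0` is the set of maximal elements. -/
def cone : ℕ → Set P
  | 0 => {p | ∀ q, ¬ p < q}
  | n + 1 => {p | ∀ q, p < q → q ∈ cone n}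

/-- The n-th level: atoms (minimal elements) of the n-th cone. -/
def level (n : ℕ) : Set P := {p | p ∈ cone P n ∧ ∀ q, q < p → q ∉ cone P n}

/-- An ω-poset: all levels finite and every element in some cone. -/
def IsOmegaPoset : Prop := (∀ n, (level P n).Finite) ∧ ∀ p : P, ∃ n, p ∈ cone P n

variable {P}

/-- `refines A C` : every element of `A` lies below some element of `C` (`A ≤ C`). -/
def refines (A C : Set P) : Prop := ∀ a ∈ A, ∃ c ∈ C, a ≤ c

/-- A cap is a subset refined by some level. -/
def IsCap (C : Set P) : Prop := ∃ n, refines (level P n) C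

/-- A selector meets every cap. -/
def IsSelector (S : Set P) : Prop := ∀ C : Set P, IsCap C → (S ∩ C).Nonempty

/-- `wedge p q` : `p` and `q` have a common lower bound. -/
def wedge (p q : P) : Prop := ∃ r, r ≤ p ∧ r ≤ q

def wedgeSet (p : P) : Set P := {q | wedge p q}

/-- The adjacency relation `p ⌅ q`. -/
def barwedge (p q : P) : Prop := ∀ C : Set P, IsCap C → ∃ c ∈ C, wedge p c ∧ wedge c q

/-- `p ⊲_C q`. -/
def starBelowOn (C : Set P) (p q : P) : Prop := ∀ c ∈ C, wedge p c → c ≤ q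

/-- The star-below relation `p ⊲ q`. -/
def starBelow (p q : P) : Prop := ∃ n, starBelowOn (level P n) p q

/-- A clique: pairwise adjacent set. -/
def IsClique (X : Set P) : Prop := ∀ p ∈ X, ∀ q ∈ X, barwedge p q

/-- Unbounded subset: meets `C^≥` for every cap `C`. -/
def IsUnbounded (X : Set P) : Prop := ∀ C : Set P, IsCap C → ∃ u ∈ X, ∃ c ∈ C, u ≤ c

variable (P)

/-- Regularity: every level is eventually star-refined by a later level. -/
def IsRegular : Prop :=
  ∀ m, ∃ n, m < n ∧ ∀ p ∈ level P n, ∃ q ∈ level P m, starBelow p q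

/-- The spectrum: minimal selectors. -/
def Spec : Set (Set P) := {S | IsSelector S ∧ ∀ T ⊆ S, IsSelector T → T = S}

def SpecT : Type _ := {S : Set P // S ∈ Spec P}

instance : TopologicalSpace (SpecT P) :=
  TopologicalSpace.generateFrom {U | ∃ p : P, U = {S : SpecT P | p ∈ S.1}}

/-- The clique-spectrum: unbounded maximal cliques. -/
def CliqueSpec : Set (Set P) :=
  {X | IsUnbounded X ∧ IsClique X ∧ ∀ Y : Set P, IsClique Y → X ⊆ Y → Y = X}

def CliqueSpecT : Type _ := {X : Set P // X ∈ CliqueSpec P}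

instance : TopologicalSpace (CliqueSpecT P) :=
  TopologicalSpace.generateFrom {U | ∃ p : P, U = {X : CliqueSpecT P | p ∉ X.1}}

variable {P}

/-- The basic open set `p_S`. -/
def pSOpen (p : P) : Set (SpecT P) := {S | p ∈ S.1}

/-- The closed set `p̄_S = {S : S ⊆ p^∧}`. -/
def pSBar (p : P) : Set (SpecT P) := {S | S.1 ⊆ wedgeSet p}

/-- Prime ω-poset: every basic open set is nonempty. -/
def IsPrimePoset (P : Type*) [PartialOrder P] : Prop := ∀ p : P, (pSOpen p).Nonempty

end OmegaPoset

end OP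


open OP in
lemma OP.IsCap.exists_finite_subcap {P : Type*} [PartialOrder P] (hP : IsOmegaPoset P)
    {C : Set P} (hC : IsCap C) : ∃ C₀ ⊆ C, C₀.Finite ∧ IsCap C₀ := by
  obtain ⟨n, hn⟩ := hC
  have hL : (level P n).Finite := hP.1 n
  have : ∀ a : level P n, ∃ c, c ∈ C ∧ (a : P) ≤ c := fun a => hn a a.2
  choose f hfC hfle using this
  have := hL.to_subtype
  refine ⟨Set.range f, ?_, Set.finite_range f, n, ?_⟩
  · rintro _ ⟨a, rfl⟩; exact hfC a
  · intro a ha; exact ⟨f ⟨a, ha⟩, ⟨⟨a, ha⟩, rfl⟩, hfle ⟨a, ha⟩⟩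

open OP in
lemma OP.exists_min_selector {P : Type*} [PartialOrder P] (hP : IsOmegaPoset P)
    {T : Set P} (hT : IsSelector T) : ∃ S ⊆ T, S ∈ Spec P := by
  have hz := zorn_superset_nonempty {S : Set P | S ⊆ T ∧ IsSelector S} ?_ T ⟨le_refl T, hT⟩
  · obtain ⟨S, hsub, ⟨hST, hSsel⟩, hmin⟩ := hz
    exact ⟨S, hST, hSsel, fun T' hT'S hT'sel =>
      le_antisymm hT'S (hmin ⟨hT'S.trans hST, hT'sel⟩ hT'S)⟩
  · intro c hcsub hchain hcne
    refine ⟨⋂₀ c, ⟨?_, ?_⟩, fun s hs => Set.sInter_subset_of_mem hs⟩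
    · obtain ⟨s, hs⟩ := hcne
      exact (Set.sInter_subset_of_mem hs).trans (hcsub hs).1
    · intro C hC
      obtain ⟨C₀, hC₀C, hC₀fin, hC₀cap⟩ := hC.exists_finite_subcap hP
      by_contra hempty
      rw [Set.not_nonempty_iff_eq_empty] at hempty
      have hne : ∀ x ∈ C₀, ∃ s ∈ c, x ∉ s := by
        intro x hx
        by_contra h
        push_neg at h
        have : x ∈ ⋂₀ c ∩ C := ⟨fun s hs => h s hs, hC₀C hx⟩
        rw [hempty] at this; exact this
      choose g hgc hgx using hne
      -- the image of C₀ under g is a finite nonempty subset of the chain c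
      obtain ⟨x₀, hx₀⟩ : C₀.Nonempty := by
        obtain ⟨s, hs⟩ := hcne
        obtain ⟨y, hy⟩ := (hcsub hs).2 C₀ hC₀cap
        exact ⟨y, hy.2⟩
      have hfin : ((fun x : C₀ => g x x.2) '' Set.univ).Finite := by
        have : Finite C₀ := hC₀fin.to_subtype
        exact Set.toFinite _
      obtain ⟨m, hm, hmmin⟩ : ∃ a ∈ (fun x : C₀ => g x x.2) '' Set.univ,
          ∀ a' ∈ (fun x : C₀ => g x x.2) '' Set.univ, id a' ≤ id a → id a = id a' := by
        obtain ⟨i, hi, hi2⟩ := Set.Finite.exists_minimalFor id _ hfin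
          ⟨g x₀ hx₀, ⟨⟨x₀, hx₀⟩, Set.mem_univ _, rfl⟩⟩
        exact ⟨i, hi, fun j hj hle => le_antisymm (hi2 hj hle) hle⟩
      obtain ⟨⟨xm, hxm⟩, -, rfl⟩ := hm
      have hmle : ∀ x (hx : x ∈ C₀), g xm hxm ⊆ g x hx := by
        intro x hx
        have hmem : g x hx ∈ (fun x : C₀ => g x x.2) '' Set.univ := ⟨⟨x, hx⟩, Set.mem_univ _, rfl⟩
        rcases hchain.total (hgc x hx) (hgc xm hxm) with h | h
        · have := hmmin _ hmem h
          simp only [id] at this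
          exact this.le
        · exact h
      obtain ⟨y, hy⟩ := (hcsub (hgc xm hxm)).2 C₀ hC₀cap
      exact hgx y hy.2 (hmle y hy.2 hy.1)

open OP in
/-- `p ⌅ q` iff `p̄_S ∩ q̄_S ≠ ∅`. -/
theorem stmt3 {P : Type*} [PartialOrder P] (hP : IsOmegaPoset P) (p q : P) :
    barwedge p q ↔ (pSBar p ∩ pSBar q).Nonempty := by
  constructor
  · intro hbw
    have hTsel : IsSelector (wedgeSet p ∩ wedgeSet q) := by
      intro C hC
      obtain ⟨c, hcC, hpc, hcq⟩ := hbw C hC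
      exact ⟨c, ⟨hpc, let ⟨r, h1, h2⟩ := hcq; ⟨r, h2, h1⟩⟩, hcC⟩
    obtain ⟨S, hST, hS⟩ := OP.exists_min_selector hP hTsel
    exact ⟨⟨S, hS⟩, fun x hx => (hST hx).1, fun x hx => (hST hx).2⟩
  · rintro ⟨X, hXp, hXq⟩ C hC
    obtain ⟨c, hcS, hcC⟩ := X.2.1 C hC
    obtain ⟨r, h1, h2⟩ := hXq hcS
    exact ⟨c, hcC, hXp hcS, r, h2, h1⟩
end

section
/- For a regular ω-poset P, the maps x(S) = S_∧ = {p : p ∧ s for all s ∈ S} and s(X) = X^⊲ = {q : ∃x ∈ X, x ⊲ q} are mutually inverse homeomorphisms between the spectrum SP (minimal selectors, with open subbasis p_S) and the clique-spectrum XP (unbounded maximal cliques with respect to adjacency ⌅, with closed subbasis p_X = {X : p ∈ X}). -/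
namespace OP

variable {P : Type*} [PartialOrder P]

theorem wedge_symm {p q : P} (h : wedge p q) : wedge q p := by
  obtain ⟨r, h1, h2⟩ := h; exact ⟨r, h2, h1⟩

theorem cone_subset_succ (n : ℕ) : cone P n ⊆ cone P (n + 1) := by
  induction n with
  | zero => exact fun p hp q hq => (hp q hq).elim
  | succ n ih => exact fun p hp q hq => ih (hp q hq)

theorem cone_mono {m n : ℕ} (h : m ≤ n) : cone P m ⊆ cone P n := by
  induction n, h using Nat.le_induction with
  | base => exact subset_rfl
  | succ n hmn ih => exact ih.trans (cone_subset_succ n)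

noncomputable def rk (p : P) : ℕ := sInf {n | p ∈ cone P n}

theorem mem_cone_rk (h2 : ∀ p : P, ∃ n, p ∈ cone P n) (p : P) : p ∈ cone P (rk p) :=
  Nat.sInf_mem (h2 p)

theorem rk_le {p : P} {n : ℕ} (h : p ∈ cone P n) : rk p ≤ n := Nat.sInf_le h

theorem rk_lt_of_lt (h2 : ∀ p : P, ∃ n, p ∈ cone P n) {p q : P} (h : p < q) : rk q < rk p := by
  have hp := mem_cone_rk h2 p
  rcases hn : rk p with _ | m
  · rw [hn] at hp; exact (hp q h).elim
  · rw [hn] at hp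
    exact Nat.lt_succ_of_le (rk_le (hp q h))

/-- Every element of a cone lies above a level element of the same index. -/
theorem exists_level_le (h2 : ∀ p : P, ∃ n, p ∈ cone P n) {k : ℕ} {p : P} (hp : p ∈ cone P k) :
    ∃ c ∈ level P k, c ≤ p := by
  have key : ∀ j (p : P), p ∈ cone P k → k ≤ rk p + j → ∃ c ∈ level P k, c ≤ p := by
    intro j
    induction j with
    | zero =>
      intro p hp hk
      refine ⟨p, ⟨hp, fun b hb hbc => ?_⟩, le_refl p⟩
      have h1 : rk p < rk b := rk_lt_of_lt h2 hb
      have h2' : rk b ≤ k := rk_le hbc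
      omega
    | succ j ih =>
      intro p hp hk
      by_cases hmin : ∀ b, b < p → b ∉ cone P k
      · exact ⟨p, ⟨hp, hmin⟩, le_refl p⟩
      · push_neg at hmin
        obtain ⟨b, hbp, hbc⟩ := hmin
        have h1 : rk p < rk b := rk_lt_of_lt h2 hbp
        obtain ⟨c, hc, hcb⟩ := ih b hbc (by omega)
        exact ⟨c, hc, hcb.trans hbp.le⟩
  exact key k p hp (by omega)

/-- Each level refines the previous one. -/
theorem level_refines_succ (h2 : ∀ p : P, ∃ n, p ∈ cone P n) (n : ℕ) :
    ∀ a ∈ level P (n + 1), ∃ c ∈ level P n, a ≤ c := by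
  intro a ha
  by_cases han : a ∈ cone P n
  · exact ⟨a, ⟨han, fun b hb hbc => ha.2 b hb (cone_subset_succ n hbc)⟩, le_refl a⟩
  · rcases n with _ | n'
    · -- n = 0 : pick a maximal element above a
      have : ¬ ∀ q, ¬ a < q := han
      push_neg at this
      obtain ⟨q, hq⟩ := this
      have hq0 : q ∈ cone P 0 := ha.1 q hq
      exact ⟨q, ⟨hq0, fun b hb hbc => (hbc q hb).elim⟩, hq.le⟩
    · by_contra H
      push_neg at H
      have key : ∀ j (q : P), a < q → n' + 1 ≤ rk q + j → q ∈ cone P n' := by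
        intro j
        induction j with
        | zero =>
          intro q haq hie
          have hqc : q ∈ cone P (n' + 1) := ha.1 q haq
          by_cases hbet : ∃ b, a < b ∧ b < q
          · obtain ⟨b, hab, hbq⟩ := hbet
            have hbc : b ∈ cone P (n' + 1) := ha.1 b hab
            have h1 : rk q < rk b := rk_lt_of_lt h2 hbq
            have h2' : rk b ≤ n' + 1 := rk_le hbc
            have h3 : rk q ≥ n' + 1 := by omega
            omega
          · -- q minimal above a
            by_cases hqL : ∀ b, b < q → b ∉ cone P (n' + 1)
            · exact absurd haq.le (H q ⟨hqc, hqL⟩)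
            · push_neg at hqL
              obtain ⟨b, hbq, hbc⟩ := hqL
              exact hbc q hbq
        | succ j ih =>
          intro q haq hie
          by_cases hbet : ∃ b, a < b ∧ b < q
          · obtain ⟨b, hab, hbq⟩ := hbet
            have h1 : rk q < rk b := rk_lt_of_lt h2 hbq
            have hb' : b ∈ cone P n' := ih b hab (by omega)
            exact cone_subset_succ n' hb' q hbq
          · by_cases hqL : ∀ b, b < q → b ∉ cone P (n' + 1)
            · exact absurd haq.le (H q ⟨ha.1 q haq, hqL⟩)
            · push_neg at hqL
              obtain ⟨b, hbq, hbc⟩ := hqL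
              exact hbc q hbq
      exact han (fun q hq => key (n' + 1) q hq (by omega))

theorem refines_trans {A B C : Set P} (h1 : refines A B) (h2' : refines B C) : refines A C := by
  intro a ha
  obtain ⟨b, hb, hab⟩ := h1 a ha
  obtain ⟨c, hc, hbc⟩ := h2' b hb
  exact ⟨c, hc, hab.trans hbc⟩

theorem refines_level (h2 : ∀ p : P, ∃ n, p ∈ cone P n) {m n : ℕ} (h : n ≤ m) : refines (level P m) (level P n) := by
  induction m, h using Nat.le_induction with
  | base => exact fun a ha => ⟨a, ha, le_refl a⟩
  | succ m hnm ih => exact refines_trans (level_refines_succ h2 m) ih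

theorem isCap_level (n : ℕ) : IsCap (level P n) := ⟨n, fun a ha => ⟨a, ha, le_refl a⟩⟩

theorem cap_refines_ge (h2 : ∀ p : P, ∃ n, p ∈ cone P n) {C : Set P} (hC : IsCap C) (j : ℕ) :
    ∃ m, j ≤ m ∧ refines (level P m) C := by
  obtain ⟨n, hn⟩ := hC
  exact ⟨max n j, le_max_right n j, refines_trans (refines_level h2 (le_max_left n j)) hn⟩

theorem wedge_barwedge (h2 : ∀ p : P, ∃ n, p ∈ cone P n) {p q : P} (h : wedge p q) : barwedge p q := by
  obtain ⟨r, hrp, hrq⟩ := h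
  intro C hC
  obtain ⟨m, hm, href⟩ := cap_refines_ge h2 hC (rk r)
  have hr : r ∈ cone P m := cone_mono hm (mem_cone_rk h2 r)
  obtain ⟨l, hl, hlr⟩ := exists_level_le h2 hr
  obtain ⟨c, hc, hlc⟩ := href l hl
  exact ⟨c, hc, ⟨l, hlr.trans hrp, hlc⟩, ⟨l, hlc, hlr.trans hrq⟩⟩

theorem starBelowOn_mono_level (h2 : ∀ p : P, ∃ n, p ∈ cone P n) {j k : ℕ} {p q : P} (hjk : j ≤ k)
    (h : starBelowOn (level P j) p q) : starBelowOn (level P k) p q := by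
  intro c hc hw
  obtain ⟨c', hc', hcc'⟩ := refines_level h2 hjk c hc
  obtain ⟨r, hrp, hrc⟩ := hw
  exact le_trans hcc' (h c' hc' ⟨r, hrp, hrc.trans hcc'⟩)

theorem starBelow_mono_left {p p' q : P} (hp : p ≤ p') (h : starBelow p' q) : starBelow p q := by
  obtain ⟨n, hn⟩ := h
  exact ⟨n, fun c hc hw => hn c hc (let ⟨r, h1, h3⟩ := hw; ⟨r, h1.trans hp, h3⟩)⟩

theorem starBelow_mono_right {p q q' : P} (h : starBelow p q) (hq : q ≤ q') : starBelow p q' := by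
  obtain ⟨n, hn⟩ := h
  exact ⟨n, fun c hc hw => (hn c hc hw).trans hq⟩

/-- R5: adjacency plus star-below gives wedge. -/
theorem wedge_of_barwedge_starBelow {y u q : P} (hb : barwedge y u) (hs : starBelow u q) :
    wedge y q := by
  obtain ⟨k, hk⟩ := hs
  obtain ⟨c, hcL, hyc, hcu⟩ := hb (level P k) (isCap_level k)
  have hcq : c ≤ q := hk c hcL (wedge_symm hcu)
  obtain ⟨r, hry, hrc⟩ := hyc
  exact ⟨r, hry, hrc.trans hcq⟩

end OP
namespace OP

variable {P : Type*} [PartialOrder P]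

theorem spec_necessity {S : Set P} (hS : S ∈ Spec P) {s : P} (hs : s ∈ S) :
    ∃ C : Set P, IsCap C ∧ S ∩ C = {s} := by
  by_cases hT : IsSelector (S \ {s})
  · have heq := hS.2 (S \ {s}) Set.diff_subset hT
    have hss : s ∈ S \ {s} := by rw [heq]; exact hs
    exact absurd rfl hss.2
  · unfold IsSelector at hT
    push_neg at hT
    obtain ⟨C, hC, hTC⟩ := hT
    have huniq : ∀ x ∈ S ∩ C, x = s := by
      intro x hx
      by_contra hxs
      have hmem : x ∈ S \ {s} ∩ C := ⟨⟨hx.1, hxs⟩, hx.2⟩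
      rw [hTC] at hmem
      exact hmem
    obtain ⟨x, hx⟩ := hS.1 C hC
    refine ⟨C, hC, ?_⟩
    ext y
    rw [Set.mem_singleton_iff]
    exact ⟨fun hy => huniq y hy, fun hy => hy ▸ (huniq x hx ▸ hx)⟩

theorem spec_directed (h2 : ∀ p : P, ∃ n, p ∈ cone P n) {S : Set P} (hS : S ∈ Spec P)
    {s t : P} (hs : s ∈ S) (ht : t ∈ S) : ∃ x ∈ S, x ≤ s ∧ x ≤ t := by
  obtain ⟨Cs, hCs, hCsS⟩ := spec_necessity hS hs
  obtain ⟨Ct, hCt, hCtS⟩ := spec_necessity hS ht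
  have hcap : IsCap {x | (x ∈ Cs ∧ x ≠ s) ∨ (x ∈ Ct ∧ x ≠ t) ∨ (x ≤ s ∧ x ≤ t)} := by
    obtain ⟨m1, _, href1⟩ := cap_refines_ge h2 hCs 0
    obtain ⟨m2, hm2, href2⟩ := cap_refines_ge h2 hCt m1
    have href1' : refines (level P m2) Cs := refines_trans (refines_level h2 hm2) href1
    refine ⟨m2, fun p hp => ?_⟩
    obtain ⟨c, hc, hpc⟩ := href1' p hp
    obtain ⟨c', hc', hpc'⟩ := href2 p hp
    by_cases hcs : c = s
    · by_cases hct : c' = t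
      · exact ⟨p, Or.inr (Or.inr ⟨hcs ▸ hpc, hct ▸ hpc'⟩), le_refl p⟩
      · exact ⟨c', Or.inr (Or.inl ⟨hc', hct⟩), hpc'⟩
    · exact ⟨c, Or.inl ⟨hc, hcs⟩, hpc⟩
  obtain ⟨x, hxS, hxE⟩ := hS.1 _ hcap
  rcases hxE with ⟨hxC, hxs⟩ | ⟨hxC, hxt⟩ | ⟨h1, h1'⟩
  · have : x ∈ S ∩ Cs := ⟨hxS, hxC⟩
    rw [hCsS] at this
    exact absurd this hxs
  · have : x ∈ S ∩ Ct := ⟨hxS, hxC⟩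
    rw [hCtS] at this
    exact absurd this hxt
  · exact ⟨x, hxS, h1, h1'⟩

theorem spec_wedge (h2 : ∀ p : P, ∃ n, p ∈ cone P n) {S : Set P} (hS : S ∈ Spec P)
    {s t : P} (hs : s ∈ S) (ht : t ∈ S) : wedge s t := by
  obtain ⟨x, _, h1, h1'⟩ := spec_directed h2 hS hs ht
  exact ⟨x, h1, h1'⟩

theorem isCap_capD {k : ℕ} {x q : P} (h : starBelowOn (level P k) x q) :
    IsCap ({q} ∪ {d | d ∈ level P k ∧ ¬ wedge x d}) := by
  refine ⟨k, fun d hd => ?_⟩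
  by_cases hw : wedge x d
  · exact ⟨q, Set.mem_union_left _ rfl, h d hd hw⟩
  · exact ⟨d, Set.mem_union_right _ ⟨hd, hw⟩, le_refl d⟩

theorem spec_upclosed {S : Set P} (hS : S ∈ Spec P) {x q : P}
    (hx : ∀ s ∈ S, wedge x s) (hsb : starBelow x q) : q ∈ S := by
  obtain ⟨k, hk⟩ := hsb
  obtain ⟨e, heS, heD⟩ := hS.1 _ (isCap_capD hk)
  rcases heD with he | ⟨_, hnw⟩
  · rw [Set.mem_singleton_iff] at he
    rwa [← he]
  · exact absurd (hx e heS) hnw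

theorem cap_star (h2 : ∀ p : P, ∃ n, p ∈ cone P n) (hreg : IsRegular P) {C : Set P}
    (hC : IsCap C) : ∃ n, ∀ l ∈ level P n, ∃ c ∈ C, starBelow l c := by
  obtain ⟨m, hm⟩ := hC
  obtain ⟨n, _, hn⟩ := hreg m
  refine ⟨n, fun l hl => ?_⟩
  obtain ⟨q, hq, hsb⟩ := hn l hl
  obtain ⟨c, hc, hqc⟩ := hm q hq
  exact ⟨c, hc, starBelow_mono_right hsb hqc⟩

theorem spec_starBelow (h2 : ∀ p : P, ∃ n, p ∈ cone P n) (hreg : IsRegular P)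
    {S : Set P} (hS : S ∈ Spec P) {s : P} (hs : s ∈ S) : ∃ u ∈ S, starBelow u s := by
  obtain ⟨C, hC, hCS⟩ := spec_necessity hS hs
  obtain ⟨n, hn⟩ := cap_star h2 hreg hC
  obtain ⟨u, huS, huL⟩ := hS.1 (level P n) (isCap_level n)
  obtain ⟨c, hcC, hsb⟩ := hn u huL
  have hcS : c ∈ S := spec_upclosed hS (fun t ht => spec_wedge h2 hS huS ht) hsb
  have hcs : c = s := by
    have : c ∈ S ∩ C := ⟨hcS, hcC⟩
    rwa [hCS] at this
  exact ⟨u, huS, hcs ▸ hsb⟩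

theorem spec_wedge_of_barwedge (h2 : ∀ p : P, ∃ n, p ∈ cone P n) (hreg : IsRegular P)
    {S : Set P} (hS : S ∈ Spec P) {y : P} (hy : ∀ s ∈ S, barwedge y s) :
    ∀ s ∈ S, wedge y s := by
  intro s hs
  obtain ⟨u, huS, hsb⟩ := spec_starBelow h2 hreg hS hs
  exact wedge_of_barwedge_starBelow (hy u huS) hsb

def xmap (S : Set P) : Set P := {p | ∀ s ∈ S, wedge p s}

def smap (X : Set P) : Set P := {q | ∃ x ∈ X, starBelow x q}

theorem xmap_clique {S : Set P} (hsel : IsSelector S) : IsClique (xmap S) := by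
  intro p hp q hq C hC
  obtain ⟨s, hsS, hsC⟩ := hsel C hC
  exact ⟨s, hsC, hp s hsS, wedge_symm (hq s hsS)⟩

theorem subset_xmap (h2 : ∀ p : P, ∃ n, p ∈ cone P n) {S : Set P} (hS : S ∈ Spec P) :
    S ⊆ xmap S := fun s hs t ht => spec_wedge h2 hS hs ht

theorem xmap_eq_barwedge (h2 : ∀ p : P, ∃ n, p ∈ cone P n) (hreg : IsRegular P)
    {S : Set P} (hS : S ∈ Spec P) : xmap S = {p | ∀ s ∈ S, barwedge p s} := by
  ext p
  exact ⟨fun hp s hs => wedge_barwedge h2 (hp s hs),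
    fun hp => spec_wedge_of_barwedge h2 hreg hS hp⟩

theorem xmap_mem_cliqueSpec (h2 : ∀ p : P, ∃ n, p ∈ cone P n) (hreg : IsRegular P)
    {S : Set P} (hS : S ∈ Spec P) : xmap S ∈ CliqueSpec P := by
  refine ⟨?_, xmap_clique hS.1, ?_⟩
  · intro C hC
    obtain ⟨s, hsS, hsC⟩ := hS.1 C hC
    exact ⟨s, subset_xmap h2 hS hsS, s, hsC, le_refl s⟩
  · intro Y hY hXY
    apply Set.Subset.antisymm ?_ hXY
    intro y hyY
    have hbw : ∀ s ∈ S, barwedge y s := fun s hs =>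
      hY y hyY s (hXY (subset_xmap h2 hS hs))
    exact fun s hs => spec_wedge_of_barwedge h2 hreg hS hbw s hs

theorem smap_necessity {X : Set P} (hX : X ∈ CliqueSpec P) {q : P} (hq : q ∈ smap X) :
    ∃ C : Set P, IsCap C ∧ smap X ∩ C = {q} := by
  obtain ⟨x, hxX, k, hk⟩ := hq
  refine ⟨_, isCap_capD hk, ?_⟩
  ext e
  rw [Set.mem_inter_iff, Set.mem_singleton_iff]
  constructor
  · rintro ⟨heS, heD⟩
    rcases heD with he | ⟨_, hnw⟩
    · exact Set.mem_singleton_iff.mp he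
    · obtain ⟨x', hx', hsb'⟩ := heS
      exact absurd (wedge_of_barwedge_starBelow (hX.2.1 x hxX x' hx') hsb') hnw
  · rintro rfl
    exact ⟨⟨x, hxX, ⟨k, hk⟩⟩, Set.mem_union_left _ rfl⟩

theorem smap_mem_spec (h2 : ∀ p : P, ∃ n, p ∈ cone P n) (hreg : IsRegular P)
    {X : Set P} (hX : X ∈ CliqueSpec P) : smap X ∈ Spec P := by
  have hsel : IsSelector (smap X) := by
    intro C hC
    obtain ⟨n, hn⟩ := cap_star h2 hreg hC
    obtain ⟨u, huX, l, hlL, hul⟩ := hX.1 (level P n) (isCap_level n)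
    obtain ⟨c, hcC, hsb⟩ := hn l hlL
    exact ⟨c, ⟨u, huX, starBelow_mono_left hul hsb⟩, hcC⟩
  refine ⟨hsel, fun T hT hTsel => Set.Subset.antisymm hT fun q hq => ?_⟩
  obtain ⟨C, hC, hCS⟩ := smap_necessity hX hq
  obtain ⟨e, heT, heC⟩ := hTsel C hC
  have : e ∈ smap X ∩ C := ⟨hT heT, heC⟩
  rw [hCS, Set.mem_singleton_iff] at this
  rwa [← this]

theorem smap_xmap (h2 : ∀ p : P, ∃ n, p ∈ cone P n) (hreg : IsRegular P)
    {S : Set P} (hS : S ∈ Spec P) : smap (xmap S) = S := by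
  ext q
  constructor
  · rintro ⟨x, hx, hsb⟩
    exact spec_upclosed hS hx hsb
  · intro hq
    obtain ⟨u, huS, hsb⟩ := spec_starBelow h2 hreg hS hq
    exact ⟨u, subset_xmap h2 hS huS, hsb⟩

theorem xmap_smap (h2 : ∀ p : P, ∃ n, p ∈ cone P n) (hreg : IsRegular P)
    {X : Set P} (hX : X ∈ CliqueSpec P) : xmap (smap X) = X := by
  have hsub : X ⊆ xmap (smap X) := by
    intro x hx q hq
    obtain ⟨x', hx', hsb⟩ := hq
    exact wedge_of_barwedge_starBelow (hX.2.1 x hx x' hx') hsb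
  exact hX.2.2 _ (xmap_clique (smap_mem_spec h2 hreg hX).1) hsub

theorem barwedge_mono_left {v q b : P} (h : barwedge v b) (hvq : v ≤ q) : barwedge q b := by
  intro C hC
  obtain ⟨c, hc, h1, h3⟩ := h C hC
  obtain ⟨r, hrv, hrc⟩ := h1
  exact ⟨c, hc, ⟨r, hrv.trans hvq, hrc⟩, h3⟩

theorem barwedge_symm {p q : P} (h : barwedge p q) : barwedge q p := by
  intro C hC
  obtain ⟨c, hc, h1, h3⟩ := h C hC
  exact ⟨c, hc, wedge_symm h3, wedge_symm h1⟩

theorem cliqueSpec_upclosed {X : Set P} (hX : X ∈ CliqueSpec P) {v q : P}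
    (hv : v ∈ X) (hvq : v ≤ q) : q ∈ X := by
  have hcl : IsClique (insert q X) := by
    intro a ha b hb
    rcases Set.mem_insert_iff.mp ha with rfl | haX
    · rcases Set.mem_insert_iff.mp hb with rfl | hbX
      · exact barwedge_mono_left (barwedge_symm (barwedge_mono_left (hX.2.1 v hv v hv) hvq)) hvq
      · exact barwedge_mono_left (hX.2.1 v hv b hbX) hvq
    · rcases Set.mem_insert_iff.mp hb with rfl | hbX
      · exact barwedge_symm (barwedge_mono_left (hX.2.1 v hv a haX) hvq)
      · exact hX.2.1 a haX b hbX
  have heq := hX.2.2 _ hcl (Set.subset_insert q X)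
  rw [← heq]
  exact Set.mem_insert q X

end OP
open OP in
/-- For a regular ω-poset, `S ↦ S_∧ = S_⌅` and `X ↦ X^⊲` are mutually inverse
homeomorphisms between the spectrum and the clique-spectrum. -/
theorem stmt5 {P : Type*} [PartialOrder P] (hP : IsOmegaPoset P) (hreg : IsRegular P) :
    ∃ f : SpecT P ≃ₜ CliqueSpecT P,
      (∀ S : SpecT P, (f S).1 = {p | ∀ s ∈ S.1, wedge p s} ∧
        (f S).1 = {p | ∀ s ∈ S.1, barwedge p s}) ∧
      ∀ X : CliqueSpecT P, (f.symm X).1 = {q | ∃ x ∈ X.1, starBelow x q} := by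
  obtain ⟨hfin, h2⟩ := hP
  let F : SpecT P → CliqueSpecT P := fun S => ⟨xmap S.1, xmap_mem_cliqueSpec h2 hreg S.2⟩
  let G : CliqueSpecT P → SpecT P := fun X => ⟨smap X.1, smap_mem_spec h2 hreg X.2⟩
  have hleft : ∀ S, G (F S) = S := fun S => Subtype.ext (smap_xmap h2 hreg S.2)
  have hright : ∀ X, F (G X) = X := fun X => Subtype.ext (xmap_smap h2 hreg X.2)
  have hcontF : Continuous F := by
    apply continuous_generateFrom_iff.mpr
    rintro U ⟨p, rfl⟩
    have hpre : F ⁻¹' {X : CliqueSpecT P | p ∉ X.1}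
        = {S : SpecT P | ∃ s ∈ S.1, ¬ wedge p s} := by
      ext S
      simp only [Set.mem_preimage, Set.mem_setOf_eq]
      constructor
      · intro h
        by_contra hc
        push_neg at hc
        exact h fun s hs => hc s hs
      · rintro ⟨s, hs, hw⟩ hmem
        exact hw (hmem s hs)
    rw [hpre]
    apply isOpen_iff_forall_mem_open.mpr
    rintro S ⟨s, hs, hw⟩
    refine ⟨{T : SpecT P | s ∈ T.1}, fun T hT => ⟨s, hT, hw⟩, ?_, hs⟩
    exact TopologicalSpace.isOpen_generateFrom_of_mem ⟨s, rfl⟩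
  have hcontG : Continuous G := by
    apply continuous_generateFrom_iff.mpr
    rintro U ⟨p, rfl⟩
    apply isOpen_iff_forall_mem_open.mpr
    intro X hX
    have hX' : p ∈ smap X.1 := hX
    have hXspec := smap_mem_spec h2 hreg X.2
    obtain ⟨u, huS, husb⟩ := spec_starBelow h2 hreg hXspec hX'
    obtain ⟨u', hu'S, j, hj⟩ := spec_starBelow h2 hreg hXspec huS
    refine ⟨{Y : CliqueSpecT P | ∀ d ∈ level P j, ¬ wedge u' d → d ∉ Y.1}, ?_, ?_, ?_⟩
    · intro Y hY
      obtain ⟨v, hvY, l, hlL, hvl⟩ := Y.2.1 (level P j) (isCap_level j)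
      have hlY : l ∈ Y.1 := cliqueSpec_upclosed Y.2 hvY hvl
      have hwl : wedge u' l := by
        by_contra hnw
        exact hY l hlL hnw hlY
      have hlu : l ≤ u := hj l hlL hwl
      exact ⟨l, hlY, starBelow_mono_left hlu husb⟩
    · have heq : {Y : CliqueSpecT P | ∀ d ∈ level P j, ¬ wedge u' d → d ∉ Y.1}
          = ⋂ d ∈ {d | d ∈ level P j ∧ ¬ wedge u' d}, {Y : CliqueSpecT P | d ∉ Y.1} := by
        ext Y
        simp only [Set.mem_setOf_eq, Set.mem_iInter]
        exact ⟨fun h d hd => h d hd.1 hd.2, fun h d hdL hnw => h d ⟨hdL, hnw⟩⟩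
      rw [heq]
      refine Set.Finite.isOpen_biInter ((hfin j).subset fun d hd => hd.1) fun d _ => ?_
      exact TopologicalSpace.isOpen_generateFrom_of_mem ⟨d, rfl⟩
    · intro d _ hnw hdX
      have hXeq : xmap (smap X.1) = X.1 := xmap_smap h2 hreg X.2
      rw [← hXeq] at hdX
      exact hnw (wedge_symm (hdX u' hu'S))
  refine ⟨⟨⟨F, G, hleft, hright⟩, hcontF, hcontG⟩,
    fun S => ⟨rfl, ?_⟩, fun X => rfl⟩
  exact xmap_eq_barwedge h2 hreg S.2
end

section
/- Let P, Q be regular ω-posets and (←_n) a thin arrow-sequence in P(Q × P). Then ⊐ = ⋃_n ⟨←_n is a strong refiner whose associated continuous map equals φ = ⋂_n (←_n)̄_S; in particular, ⊐ is a refiner if and only if φ is a function, and in that case φ = S_⊐ is continuous. -/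
namespace OP

section Refiners

variable {P Q : Type*} [PartialOrder P] [PartialOrder Q]

/-- A refiner: every cap of `Q` is refined through the relation by some cap of `P`. -/
def IsRefinerRel (R : Q → P → Prop) : Prop :=
  ∀ C : Set Q, IsCap C → ∃ B : Set P, IsCap B ∧ ∀ b ∈ B, ∃ c ∈ C, R c b

/-- `∧`-preserving: `⊐ ∘ ∧ ∘ ⊏ ⊆ ∧`. -/
def WedgePres (R : Q → P → Prop) : Prop :=
  ∀ q p p' q', R q p → wedge p p' → R q' p' → wedge q q'

/-- `⌅`-preserving: `⊐ ∘ ⌅ ∘ ⊏ ⊆ ⌅`. -/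
def BarwedgePres (R : Q → P → Prop) : Prop :=
  ∀ q p p' q', R q p → barwedge p p' → R q' p' → barwedge q q'

/-- The star `⊐*` of a relation: `q ⊐* p` iff some cap `C` has `C ∩ p^∧ ⊏ q`. -/
def relStar (R : Q → P → Prop) (q : Q) (p : P) : Prop :=
  ∃ C : Set P, IsCap C ∧ ∀ c ∈ C, wedge p c → R q c

/-- Composition `▷ ∘ ⊐` with the star-above relation on `Q`. -/
def starAboveComp (R : Q → P → Prop) : Q → P → Prop :=
  fun q p => ∃ q', starBelow q' q ∧ R q' p

/-- A strong refiner: a `∧`-preserving refiner with `⊐ = ▷ * ⊐`. -/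
def IsStrongRefiner (R : Q → P → Prop) : Prop :=
  IsRefinerRel R ∧ WedgePres R ∧ ∀ q p, R q p ↔ relStar (starAboveComp R) q p

/-- `φ` is the continuous map associated to `R`, i.e. `φ(S) = S^{⊏ ⊲}`. -/
def specMapOf (R : Q → P → Prop) (φ : SpecT P → SpecT Q) : Prop :=
  ∀ S : SpecT P, (φ S).1 = {r : Q | ∃ p ∈ S.1, ∃ q, R q p ∧ starBelow q r}

/-- The relation `⊒_φ`: `q ⊒_φ p` iff `q̄_S ⊇ φ[p̄_S]`. -/
def relBarPhi (φ : SpecT P → SpecT Q) (q : Q) (p : P) : Prop :=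
  ∀ S : SpecT P, S ∈ pSBar p → φ S ∈ pSBar q

/-- The relation `⊐_φ`: `q ⊐_φ p` iff `q_S ⊇ φ[p̄_S]`. -/
def relPhi (φ : SpecT P → SpecT Q) (q : Q) (p : P) : Prop :=
  ∀ S : SpecT P, S ∈ pSBar p → φ S ∈ pSOpen q

/-- An arrow: a finite relation with `← ∘ ⌅` co-surjective. -/
def IsArrow (A : Q → P → Prop) : Prop :=
  {x : Q × P | A x.1 x.2}.Finite ∧ ∀ p : P, ∃ q p', A q p' ∧ barwedge p' p

/-- `A ≤ B` for relations: `A ⊆ ≤ ∘ B ∘ ≥`. -/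
def arrowLe (A B : Q → P → Prop) : Prop :=
  ∀ q p, A q p → ∃ q' p', q ≤ q' ∧ p ≤ p' ∧ B q' p'

/-- The relation `⟨←` of an arrow: `q ⟨← p` iff `p^{⌅→} ⊲ q`. -/
def angleRel (A : Q → P → Prop) (q : Q) (p : P) : Prop :=
  ∀ q', (∃ p', barwedge p p' ∧ A q' p') → starBelow q' q

/-- The relation `⋂ₙ (←ₙ)̄_S` on spectra determined by a sequence of arrows. -/
def seqGraph (A : ℕ → Q → P → Prop) (T : SpecT Q) (S : SpecT P) : Prop :=
  ∀ n, ∃ q p, A n q p ∧ T.1 ⊆ wedgeSet q ∧ S.1 ⊆ wedgeSet p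

end Refiners

end OP

namespace OPAux
open OP

variable {P : Type*} [PartialOrder P]

/-- cones are increasing -/
lemma cone_succ_mono {n : ℕ} : cone P n ⊆ cone P (n + 1) := by
  induction n with
  | zero => intro p hp q hq; exact absurd hq (hp q)
  | succ n ih => intro p hp q hq; exact ih (hp q hq)

lemma cone_mono {m n : ℕ} (h : m ≤ n) : cone P m ⊆ cone P n := by
  induction h with
  | refl => exact subset_rfl
  | step _ ih => exact ih.trans cone_succ_mono

/-- non-minimal elements of `cone (n+1)` are in `cone n` -/
lemma mem_cone_of_lt {n : ℕ} {x y : P} (hy : y ∈ cone P (n + 1)) (hxy : y < x) :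
    x ∈ cone P n := hy x hxy

/-- every element of a cone is in some level below it -/
lemma exists_level_of_cone {j : ℕ} {x : P} (hx : x ∈ cone P j) :
    ∃ j' ≤ j, x ∈ level P j' := by
  induction j with
  | zero =>
    refine ⟨0, le_rfl, hx, fun y hy hyc => ?_⟩
    exact hyc x hy
  | succ n ih =>
    by_cases hmin : ∀ y, y < x → y ∉ cone P (n + 1)
    · exact ⟨n + 1, le_rfl, hx, hmin⟩
    · push_neg at hmin
      obtain ⟨y, hyx, hyc⟩ := hmin
      obtain ⟨j', hj', hx'⟩ := ih (hyc x hyx)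
      exact ⟨j', hj'.trans (Nat.le_succ n), hx'⟩

/-- every element of `cone m` has a `level m` element below it -/
lemma exists_level_below {m : ℕ} {x : P} (hx : x ∈ cone P m) :
    ∃ y ≤ x, y ∈ level P m := by
  induction m with
  | zero =>
    exact ⟨x, le_rfl, hx, fun y hy hyc => hyc x hy⟩
  | succ n ih =>
    by_cases hmin : ∀ y, y < x → y ∉ cone P (n + 1)
    · exact ⟨x, le_rfl, hx, hmin⟩
    · push_neg at hmin
      obtain ⟨z, hzx, hzc⟩ := hmin
      obtain ⟨y, hyx, hy⟩ := ih (hzc x hzx)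
      by_cases hymin : ∀ w, w < y → w ∉ cone P (n + 1)
      · exact ⟨y, hyx, cone_succ_mono hy.1, hymin⟩
      · push_neg at hymin
        obtain ⟨w, hwy, hwc⟩ := hymin
        refine ⟨w, (hwy.le.trans hyx), hwc, fun v hv hvc => ?_⟩
        exact hy.2 w hwy (hvc w hv)

/-- `level (n+1)` refines `level n` -/
lemma level_succ_refines (n : ℕ) : refines (level P (n + 1)) (level P n) := by
  intro p hp
  by_cases hpc : p ∈ cone P n
  · refine ⟨p, ⟨hpc, fun y hy hyc => hp.2 y hy (cone_succ_mono hyc)⟩, le_rfl⟩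
  · cases n with
    | zero =>
      have : ∃ q, p < q := by
        by_contra h
        push_neg at h
        exact hpc h
      obtain ⟨q, hq⟩ := this
      have hq0 : q ∈ cone P 0 := hp.1 q hq
      exact ⟨q, ⟨hq0, fun z hz hzc => hzc q hz⟩, hq.le⟩
    | succ m =>
      have : ∃ q, p < q ∧ q ∉ cone P m := by
        by_contra h
        push_neg at h
        exact hpc fun q hq => h q hq
      obtain ⟨q, hq, hqm⟩ := this
      have hqc : q ∈ cone P (m + 1) := hp.1 q hq
      refine ⟨q, ⟨hqc, fun z hz hzc => hqm (hzc q hz)⟩, hq.le⟩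

lemma refines_trans_le {A B C : Set P} (h1 : refines A B) (h2 : refines B C) :
    refines A C := by
  intro a ha
  obtain ⟨b, hb, hab⟩ := h1 a ha
  obtain ⟨c, hc, hbc⟩ := h2 b hb
  exact ⟨c, hc, hab.trans hbc⟩

lemma level_refines {m n : ℕ} (h : m ≤ n) : refines (level P n) (level P m) := by
  induction h with
  | refl => exact fun a ha => ⟨a, ha, le_rfl⟩
  | step h ih => exact refines_trans_le (level_succ_refines _) ih

lemma level_isCap (n : ℕ) : IsCap (level P n) := ⟨n, fun a ha => ⟨a, ha, le_rfl⟩⟩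

end OPAux
namespace OPAux
open OP

variable {P : Type*} [PartialOrder P]

lemma wedge_symm {p q : P} (h : wedge p q) : wedge q p := by
  obtain ⟨r, h1, h2⟩ := h; exact ⟨r, h2, h1⟩

lemma wedge_self (p : P) : wedge p p := ⟨p, le_rfl, le_rfl⟩

lemma wedge_of_le {p q : P} (h : p ≤ q) : wedge p q := ⟨p, le_rfl, h⟩

lemma wedge_mono_right {p q q' : P} (h : wedge p q) (hq : q ≤ q') : wedge p q' := by
  obtain ⟨r, h1, h2⟩ := h; exact ⟨r, h1, h2.trans hq⟩

lemma wedge_mono_left {p p' q : P} (h : wedge p q) (hp : p ≤ p') : wedge p' q := by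
  obtain ⟨r, h1, h2⟩ := h; exact ⟨r, h1.trans hp, h2⟩

/-- L3: for every `x` and every `m` there is a level-`m` element wedging `x`. -/
lemma exists_level_wedge (hP : IsOmegaPoset P) (m : ℕ) (x : P) :
    ∃ a ∈ level P m, wedge x a := by
  obtain ⟨j, hj⟩ := hP.2 x
  obtain ⟨j', hj'le, hxl⟩ := exists_level_of_cone hj
  rcases le_or_gt j' m with h | h
  · have hxm : x ∈ cone P m := cone_mono h hxl.1
    obtain ⟨y, hyx, hy⟩ := exists_level_below hxm
    exact ⟨y, hy, ⟨y, hyx, le_rfl⟩⟩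
  · obtain ⟨a, ha, hxa⟩ := level_refines h.le x hxl
    exact ⟨a, ha, wedge_of_le hxa⟩

/-- L4: every cap contains an element wedging any given `x`. -/
lemma cap_wedge (hP : IsOmegaPoset P) {C : Set P} (hC : IsCap C) (x : P) :
    ∃ c ∈ C, wedge x c := by
  obtain ⟨n, hn⟩ := hC
  obtain ⟨a, ha, hxa⟩ := exists_level_wedge hP n x
  obtain ⟨c, hc, hac⟩ := hn a ha
  exact ⟨c, hc, wedge_mono_right hxa hac⟩

/-- L5: wedge implies barwedge. -/
lemma barwedge_of_wedge (hP : IsOmegaPoset P) {p q : P} (h : wedge p q) :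
    barwedge p q := by
  obtain ⟨r, hrp, hrq⟩ := h
  intro C hC
  obtain ⟨c, hc, hrc⟩ := cap_wedge hP hC r
  obtain ⟨u, hur, huc⟩ := hrc
  exact ⟨c, hc, ⟨u, huc, hur.trans hrp⟩ |> wedge_symm, ⟨u, huc, hur.trans hrq⟩⟩

lemma barwedge_symm {p q : P} (h : barwedge p q) : barwedge q p := by
  intro C hC
  obtain ⟨c, hc, h1, h2⟩ := h C hC
  exact ⟨c, hc, wedge_symm h2, wedge_symm h1⟩

lemma barwedge_mono_left {p p' q : P} (h : barwedge p q) (hp : p ≤ p') : barwedge p' q := by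
  intro C hC
  obtain ⟨c, hc, h1, h2⟩ := h C hC
  exact ⟨c, hc, wedge_symm (wedge_mono_right (wedge_symm h1) hp), h2⟩

lemma barwedge_mono_right {p q q' : P} (h : barwedge p q) (hq : q ≤ q') : barwedge p q' := by
  intro C hC
  obtain ⟨c, hc, h1, h2⟩ := h C hC
  exact ⟨c, hc, h1, wedge_mono_right h2 hq⟩

/-- star-below is stable under passing to deeper levels. -/
lemma starBelowOn_mono {k k' : ℕ} {x y : P} (h : starBelowOn (level P k) x y)
    (hk : k ≤ k') : starBelowOn (level P k') x y := by
  intro e he hwe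
  obtain ⟨f, hf, hef⟩ := level_refines hk e he
  exact (h f hf (wedge_mono_right hwe hef)).trans' hef

lemma starBelowOn_anti {C : Set P} {x x' y : P} (h : starBelowOn C x y) (hx : x' ≤ x) :
    starBelowOn C x' y := fun c hc hw => h c hc (wedge_symm (wedge_mono_right (wedge_symm hw) hx))

lemma starBelowOn_le {C : Set P} {x y y' : P} (h : starBelowOn C x y) (hy : y ≤ y') :
    starBelowOn C x y' := fun c hc hw => (h c hc hw).trans hy

lemma starBelow_anti {x x' y : P} (h : starBelow x y) (hx : x' ≤ x) : starBelow x' y := by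
  obtain ⟨k, hk⟩ := h; exact ⟨k, starBelowOn_anti hk hx⟩

lemma starBelow_le {x y y' : P} (h : starBelow x y) (hy : y ≤ y') : starBelow x y' := by
  obtain ⟨k, hk⟩ := h; exact ⟨k, starBelowOn_le hk hy⟩

/-- star-below composes. -/
lemma starBelow_trans {x y z : P} (h1 : starBelow x y) (h2 : starBelow y z) :
    starBelow x z := by
  obtain ⟨k1, hk1⟩ := h1
  obtain ⟨k2, hk2⟩ := h2
  refine ⟨max k1 k2, fun e he hwe => ?_⟩
  have h1' := starBelowOn_mono hk1 (le_max_left k1 k2)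
  have h2' := starBelowOn_mono hk2 (le_max_right k1 k2)
  have hey : e ≤ y := h1' e he hwe
  exact h2' e he ⟨e, hey, le_rfl⟩

/-- star refinement of caps (cap-star). -/
lemma cap_star (hreg : IsRegular P) {D : Set P} (hD : IsCap D) :
    ∃ k, ∀ a ∈ level P k, ∃ d ∈ D, starBelow a d := by
  obtain ⟨m, hm⟩ := hD
  obtain ⟨n, _, hn⟩ := hreg m
  refine ⟨n, fun a ha => ?_⟩
  obtain ⟨b, hb, hab⟩ := hn a ha
  obtain ⟨d, hd, hbd⟩ := hm b hb
  exact ⟨d, hd, starBelow_le hab hbd⟩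

/-- every cap contains a finite subcap. -/
lemma exists_finite_subcap (hP : IsOmegaPoset P) {C : Set P} (hC : IsCap C) :
    ∃ C' ⊆ C, C'.Finite ∧ IsCap C' := by
  obtain ⟨n, hn⟩ := hC
  choose f hf1 hf2 using hn
  classical
  refine ⟨(fun a : {a // a ∈ level P n} => f a.1 a.2) '' Set.univ, ?_, ?_, ⟨n, ?_⟩⟩
  · rintro c ⟨a, -, rfl⟩; exact hf1 _ _
  · have : (level P n).Finite := hP.1 n
    have := this.to_subtype
    exact Set.toFinite _
  · intro a ha
    exact ⟨f a ha, ⟨⟨a, ha⟩, Set.mem_univ _, rfl⟩, hf2 a ha⟩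

end OPAux
namespace OPAux
open OP

variable {P : Type*} [PartialOrder P]

/-- M1: each member of a minimal selector is pinned by a cap. -/
lemma spec_pin {S : Set P} (hS : S ∈ Spec P) {p : P} (hp : p ∈ S) :
    ∃ C, IsCap C ∧ S ∩ C = {p} := by
  classical
  by_contra h
  push_neg at h
  have hsel : IsSelector (S \ {p}) := by
    intro C hC
    rcases (hS.1 C hC) with ⟨x, hxS, hxC⟩
    by_cases hxp : x = p
    · have hpC : p ∈ S ∩ C := ⟨hp, hxp ▸ hxC⟩
      have hne := h C hC
      have hns : ¬ (S ∩ C ⊆ ({p} : Set P)) := by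
        intro hsub
        refine hne (Set.Subset.antisymm hsub ?_)
        intro y hy
        simp only [Set.mem_singleton_iff] at hy
        subst hy; exact hpC
      rcases Set.not_subset.1 hns with ⟨y, ⟨hyS, hyC⟩, hyp⟩
      exact ⟨y, ⟨hyS, hyp⟩, hyC⟩
    · exact ⟨x, ⟨hxS, hxp⟩, hxC⟩
  have heq := hS.2 (S \ {p}) Set.diff_subset hsel
  have : p ∈ S \ {p} := by rw [heq]; exact hp
  exact this.2 rfl

/-- M2: minimal selectors are up-closed. -/
lemma spec_upclosed {S : Set P} (hS : S ∈ Spec P) {p q : P} (hp : p ∈ S) (hpq : p ≤ q) :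
    q ∈ S := by
  obtain ⟨C, hC, hSC⟩ := spec_pin hS hp
  classical
  have hcap : IsCap ((C \ {p}) ∪ {q}) := by
    obtain ⟨n, hn⟩ := hC
    refine ⟨n, fun a ha => ?_⟩
    obtain ⟨c, hc, hac⟩ := hn a ha
    by_cases hcp : c = p
    · exact ⟨q, Set.mem_union_right _ rfl, hac.trans (hcp ▸ hpq)⟩
    · exact ⟨c, Set.mem_union_left _ ⟨hc, hcp⟩, hac⟩
  obtain ⟨x, hxS, hxC⟩ := hS.1 _ hcap
  rcases hxC with hx | hx
  · exfalso
    have : x ∈ S ∩ C := ⟨hxS, hx.1⟩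
    rw [hSC] at this
    exact hx.2 this
  · rwa [Set.mem_singleton_iff.1 hx] at hxS

/-- meet of two caps is a cap. -/
lemma cap_meet {C D : Set P} (hC : IsCap C) (hD : IsCap D) :
    IsCap {x | (∃ c ∈ C, x ≤ c) ∧ ∃ d ∈ D, x ≤ d} := by
  obtain ⟨m, hm⟩ := hC
  obtain ⟨n, hn⟩ := hD
  refine ⟨max m n, fun a ha => ⟨a, ⟨?_, ?_⟩, le_rfl⟩⟩
  · obtain ⟨b, hb, hab⟩ := level_refines (le_max_left m n) a ha
    obtain ⟨c, hc, hbc⟩ := hm b hb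
    exact ⟨c, hc, hab.trans hbc⟩
  · obtain ⟨b, hb, hab⟩ := level_refines (le_max_right m n) a ha
    obtain ⟨d, hd, hbd⟩ := hn b hb
    exact ⟨d, hd, hab.trans hbd⟩

/-- M3: minimal selectors are pairwise wedged. -/
lemma spec_wedge {S : Set P} (hS : S ∈ Spec P) {p q : P} (hp : p ∈ S) (hq : q ∈ S) :
    wedge p q := by
  obtain ⟨C, hC, hSC⟩ := spec_pin hS hp
  obtain ⟨D, hD, hSD⟩ := spec_pin hS hq
  obtain ⟨x, hxS, hxC, hxD⟩ := hS.1 _ (cap_meet hC hD)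
  obtain ⟨c, hc, hxc⟩ := hxC
  obtain ⟨d, hd, hxd⟩ := hxD
  have hcS : c ∈ S ∩ C := ⟨spec_upclosed hS hxS hxc, hc⟩
  have hdS : d ∈ S ∩ D := ⟨spec_upclosed hS hxS hxd, hd⟩
  rw [hSC] at hcS; rw [hSD] at hdS
  exact ⟨x, hxc.trans_eq hcS, hxd.trans_eq hdS⟩

/-- Zorn: every selector contains a minimal selector. -/
lemma exists_spec_subset (hP : IsOmegaPoset P) {N : Set P} (hN : IsSelector N) :
    ∃ S ∈ Spec P, S ⊆ N := by
  classical
  have hZ : ∀ c ⊆ {T : Set P | T ⊆ N ∧ IsSelector T}, IsChain (· ⊆ ·) c → c.Nonempty →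
      ∃ lb ∈ {T : Set P | T ⊆ N ∧ IsSelector T}, ∀ s ∈ c, lb ⊆ s := by
    intro c hc hchain hne
    refine ⟨⋂₀ c, ⟨?_, ?_⟩, fun s hs => Set.sInter_subset_of_mem hs⟩
    · obtain ⟨t, ht⟩ := hne
      exact (Set.sInter_subset_of_mem ht).trans (hc ht).1
    · intro C hC
      obtain ⟨C', hC'sub, hC'fin, hC'cap⟩ := exists_finite_subcap hP hC
      -- the traces T ∩ C' for T ∈ c form a chain of nonempty subsets of finite C'
      have key : ∃ T0 ∈ c, ∀ T ∈ c, T0 ∩ C' ⊆ T ∩ C' := by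
        by_contra hno
        push_neg at hno
        -- use finiteness: the set of traces is finite and a chain, so has a least element
        have htr : {E : Set P | ∃ T ∈ c, E = T ∩ C'}.Finite := by
          have : {E : Set P | ∃ T ∈ c, E = T ∩ C'} ⊆ 𝒫 C' := by
            rintro E ⟨T, -, rfl⟩; exact Set.inter_subset_right
          exact (Set.Finite.powerset hC'fin).subset this
        have hne' : {E : Set P | ∃ T ∈ c, E = T ∩ C'}.Nonempty := by
          obtain ⟨t, ht⟩ := hne; exact ⟨t ∩ C', t, ht, rfl⟩
        obtain ⟨E, ⟨T0, hT0, rfl⟩, hEmin⟩ := Set.Finite.exists_minimalFor id _ htr hne'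
        obtain ⟨T, hT, hnsub⟩ := hno T0 hT0
        refine hnsub ?_
        rcases hchain.total hT0 hT with h | h
        · exact fun x hx => ⟨h hx.1, hx.2⟩
        · intro x hx
          have hTT0 : T ∩ C' ⊆ T0 ∩ C' := fun y hy => ⟨h hy.1, hy.2⟩
          have heq := @hEmin (T ∩ C') ⟨T, hT, rfl⟩ hTT0
          simp only [id] at heq
          exact heq hx
      obtain ⟨T0, hT0c, hT0min⟩ := key
      obtain ⟨x, hxT0, hxC'⟩ := (hc hT0c).2 C' hC'cap
      refine ⟨x, ?_, hC'sub hxC'⟩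
      exact Set.mem_sInter.2 fun T hT => (hT0min T hT ⟨hxT0, hxC'⟩).1
  obtain ⟨m, hm, hmin⟩ := zorn_superset_nonempty _ hZ N ⟨subset_rfl, hN⟩
  obtain ⟨hmem, hmin2⟩ := hmin
  exact ⟨m, ⟨hmem.2, fun T hTm hT =>
    Set.Subset.antisymm hTm (hmin2 ⟨hTm.trans hmem.1, hT⟩ hTm)⟩, hmem.1⟩

/-- wedgeSet of any element is a selector. -/
lemma wedgeSet_selector (hP : IsOmegaPoset P) (u : P) : IsSelector (wedgeSet u) := by
  intro C hC
  obtain ⟨c, hc, huc⟩ := cap_wedge hP hC u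
  exact ⟨c, huc, hc⟩

/-- a minimal selector meets every level. -/
lemma spec_meets_level {S : Set P} (hS : S ∈ Spec P) (n : ℕ) :
    ∃ a ∈ S, a ∈ level P n := by
  obtain ⟨a, ha, hal⟩ := hS.1 _ (level_isCap n)
  exact ⟨a, ha, hal⟩

end OPAux
namespace OPAux
open OP

variable {P : Type*} [PartialOrder P]

lemma univ_isCap : IsCap (Set.univ : Set P) := ⟨0, fun a _ => ⟨a, trivial, le_rfl⟩⟩

lemma finset_meet_cap (F : Finset P) {g : P → Set P} (hg : ∀ s ∈ F, IsCap (g s)) :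
    ∃ C, IsCap C ∧ ∀ x ∈ C, ∀ s ∈ F, ∃ y ∈ g s, x ≤ y := by
  classical
  induction F using Finset.induction_on with
  | empty => exact ⟨Set.univ, univ_isCap, by simp⟩
  | @insert a F' ha ih =>
    obtain ⟨C, hC, hCp⟩ := ih (fun s hs => hg s (Finset.mem_insert_of_mem hs))
    have hga := hg a (Finset.mem_insert_self _ _)
    refine ⟨_, cap_meet hga hC, ?_⟩
    rintro x ⟨⟨c, hc, hxc⟩, ⟨d, hd, hxd⟩⟩ s hs
    rcases Finset.mem_insert.1 hs with rfl | hs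
    · exact ⟨c, hc, hxc⟩
    · obtain ⟨y, hy, hdy⟩ := hCp d hd s hs
      exact ⟨y, hy, hxd.trans hdy⟩

/-- M5': roundness of minimal selectors w.r.t. finite subsets. -/
lemma spec_round (hreg : IsRegular P) {S : Set P} (hS : S ∈ Spec P)
    (F : Finset P) (hFS : ∀ s ∈ F, s ∈ S) :
    ∃ a ∈ S, ∀ s ∈ F, starBelow a s := by
  classical
  have hpin : ∀ s ∈ S, ∃ C, IsCap C ∧ S ∩ C = {s} := fun s hs => spec_pin hS hs
  set g : P → Set P := fun s =>
    if h : s ∈ S then Classical.choose (spec_pin hS h) else Set.univ with hgdef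
  have hgcap : ∀ s ∈ F, IsCap (g s) := by
    intro s hs
    simp only [hgdef, dif_pos (hFS s hs)]
    exact (Classical.choose_spec (spec_pin hS (hFS s hs))).1
  have hgpin : ∀ s (h : s ∈ S), S ∩ g s = {s} := by
    intro s h
    simp only [hgdef, dif_pos h]
    exact (Classical.choose_spec (spec_pin hS h)).2
  obtain ⟨C, hC, hCp⟩ := finset_meet_cap F hgcap
  obtain ⟨k, hk⟩ := cap_star hreg hC
  obtain ⟨a, haS, hal⟩ := spec_meets_level hS k
  obtain ⟨c, hcC, hac⟩ := hk a hal
  refine ⟨a, haS, fun s hs => ?_⟩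
  obtain ⟨y, hyg, hcy⟩ := hCp c hcC s hs
  have hay : starBelow a y := starBelow_le hac hcy
  obtain ⟨k', hk'⟩ := id hay
  obtain ⟨b, hbS, hbl⟩ := spec_meets_level hS k'
  have hby : b ≤ y := hk' b hbl (wedge_symm (spec_wedge hS hbS haS))
  have hyS : y ∈ S := spec_upclosed hS hbS hby
  have hymem : y ∈ S ∩ g s := ⟨hyS, hyg⟩
  rw [hgpin s (hFS s hs)] at hymem
  exact (Set.mem_singleton_iff.1 hymem) ▸ hay

/-- uniform level witness for finitely many star-below facts. -/
lemma uniform_starBelow {F : Finset (P × P)} (h : ∀ x ∈ F, starBelow x.1 x.2) :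
    ∃ K, ∀ x ∈ F, starBelowOn (level P K) x.1 x.2 := by
  classical
  induction F using Finset.induction_on with
  | empty => exact ⟨0, by simp⟩
  | @insert a F' ha ih =>
    obtain ⟨K1, hK1⟩ := ih (fun x hx => h x (Finset.mem_insert_of_mem hx))
    obtain ⟨K2, hK2⟩ := h a (Finset.mem_insert_self _ _)
    refine ⟨max K1 K2, fun x hx => ?_⟩
    rcases Finset.mem_insert.1 hx with rfl | hx
    · exact starBelowOn_mono hK2 (le_max_right _ _)
    · exact starBelowOn_mono (hK1 x hx) (le_max_left _ _)

/-- pigeonhole: a property hit in a fixed finite set for every `n` is hit cofinally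
at a single element. -/
lemma pigeonhole_cofinal {α : Type*} {E : Set α} (hE : E.Finite) {Φ : ℕ → α → Prop}
    (h : ∀ n, ∃ e ∈ E, Φ n e) : ∃ e ∈ E, ∀ n, ∃ n' ≥ n, Φ n' e := by
  classical
  choose f hfE hfΦ using h
  by_contra hc
  push_neg at hc
  have hc' : ∀ e, ∃ n, e ∈ E → ∀ n' ≥ n, ¬ Φ n' e := by
    intro e
    by_cases he : e ∈ E
    · obtain ⟨n, hn⟩ := hc e he
      exact ⟨n, fun _ n' hn' => hn n' hn'⟩
    · exact ⟨0, fun h' => absurd h' he⟩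
  choose N hN using hc'
  set M := hE.toFinset.sup N with hM
  exact hN (f M) (hfE M) M (Finset.le_sup (hE.mem_toFinset.2 (hfE M))) (hfΦ M)

open CategoryTheory in
/-- König-type threading through finite nonempty stages. -/
lemma koenig {α : Type*} (V : ℕ → Set α) (hfin : ∀ n, (V n).Finite)
    (hne : ∀ n, (V n).Nonempty) (r : α → α → Prop)
    (hstep : ∀ n, ∀ x ∈ V (n + 1), ∃ y ∈ V n, r x y) :
    ∃ g : ℕ → α, (∀ n, g n ∈ V n) ∧ ∀ n, r (g (n + 1)) (g n) := by
  classical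
  have hstep' : ∀ n (x : V (n + 1)), ∃ y : V n, r x.1 y.1 := by
    intro n x
    obtain ⟨y, hy, hr⟩ := hstep n x.1 x.2
    exact ⟨⟨y, hy⟩, hr⟩
  choose f hf using hstep'
  let F : ℕᵒᵖ ⥤ Type _ := Functor.ofOpSequence (X := fun n => V n) (fun n => TypeCat.ofHom (f n))
  have : ∀ j : ℕᵒᵖ, Finite (F.obj j) := by
    intro j
    have := (hfin j.unop).to_subtype
    exact this
  have : ∀ j : ℕᵒᵖ, Nonempty (F.obj j) := by
    intro j
    obtain ⟨x, hx⟩ := hne j.unop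
    exact ⟨⟨x, hx⟩⟩
  obtain ⟨s, hs⟩ := nonempty_sections_of_finite_inverse_system F
  refine ⟨fun n => (s ⟨n⟩).1, fun n => (s ⟨n⟩).2, fun n => ?_⟩
  have hcomp := hs (f := (homOfLE (Nat.le_add_right n 1)).op)
  rw [Functor.ofOpSequence_map_homOfLE_succ] at hcomp
  have := hf n (s ⟨n + 1⟩)
  rw [show f n (s ⟨n + 1⟩) = s ⟨n⟩ from hcomp] at this
  exact this

end OPAux
namespace OPAux
open OP

section Main

variable {P Q : Type*} [PartialOrder P] [PartialOrder Q]

lemma arrowLe_refl (B : Q → P → Prop) : arrowLe B B := fun q p h => ⟨q, p, le_rfl, le_rfl, h⟩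

lemma arrowLe_trans {B C D : Q → P → Prop} (h1 : arrowLe B C) (h2 : arrowLe C D) :
    arrowLe B D := by
  intro q p h
  obtain ⟨q', p', hq, hp, h'⟩ := h1 q p h
  obtain ⟨q'', p'', hq', hp', h''⟩ := h2 q' p' h'
  exact ⟨q'', p'', hq.trans hq', hp.trans hp', h''⟩

variable {A : ℕ → Q → P → Prop}

lemma arrowLe_of_le (hdec : ∀ n, arrowLe (A (n + 1)) (A n)) {m n : ℕ} (h : n ≤ m) :
    arrowLe (A m) (A n) := by
  induction h with
  | refl => exact arrowLe_refl _
  | @step k h ih => exact arrowLe_trans (hdec k) ih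

/-- the union relation `⊐`. -/
def Rrel (A : ℕ → Q → P → Prop) : Q → P → Prop := fun q p => ∃ n, angleRel (A n) q p

/-- the candidate image `S^{⊏⊲}`. -/
def T0 (A : ℕ → Q → P → Prop) (S : Set P) : Set Q :=
  {r | ∃ p ∈ S, ∃ q, Rrel A q p ∧ starBelow q r}

lemma wedge_of_adj_star {x a s : P} (h1 : barwedge x a) (h2 : starBelow a s) :
    wedge x s := by
  obtain ⟨k, hk⟩ := h2
  obtain ⟨c, hc, hxc, hca⟩ := h1 (level P k) (level_isCap k)
  exact wedge_mono_right hxc (hk c hc (wedge_symm hca))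

/-- (U): `T0 A S` is contained in any minimal selector related to `S` by the graph. -/
lemma T0_subset (hP : IsOmegaPoset P) {S : Set P} {T : Set Q} (hT : T ∈ Spec Q)
    (hG : ∀ n, ∃ q p, A n q p ∧ T ⊆ wedgeSet q ∧ S ⊆ wedgeSet p) :
    T0 A S ⊆ T := by
  rintro r ⟨p, hpS, q1, ⟨n0, hang⟩, hstar⟩
  obtain ⟨qt, pt, hApair, hTq, hSp⟩ := hG n0
  have hwp : wedge pt p := hSp hpS
  have hbw : barwedge p pt := barwedge_symm (barwedge_of_wedge hP hwp)
  have hsb : starBelow qt q1 := hang qt ⟨pt, hbw, hApair⟩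
  obtain ⟨k, hk⟩ := hsb
  obtain ⟨t, htT, htl⟩ := spec_meets_level hT k
  have htq1 : t ≤ q1 := hk t htl (hTq htT)
  have hq1T : q1 ∈ T := spec_upclosed hT htT htq1
  obtain ⟨k', hk'⟩ := hstar
  obtain ⟨t', ht'T, ht'l⟩ := spec_meets_level hT k'
  have ht'r : t' ≤ r := hk' t' ht'l (spec_wedge hT hq1T ht'T)
  exact spec_upclosed hT ht'T ht'r

/-- `T0` is a selector when `⊐` is a refiner. -/
lemma T0_selector (hregQ : IsRegular Q) (href : IsRefinerRel (Rrel A))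
    {S : Set P} (hSsel : IsSelector S) : IsSelector (T0 A S) := by
  intro D hD
  obtain ⟨k, hk⟩ := cap_star hregQ hD
  obtain ⟨B, hB, hBr⟩ := href (level Q k) (level_isCap k)
  obtain ⟨p1, hp1S, hp1B⟩ := hSsel B hB
  obtain ⟨a, hal, hRa⟩ := hBr p1 hp1B
  obtain ⟨d, hdD, hsb⟩ := hk a hal
  exact ⟨d, ⟨p1, hp1S, a, hRa, hsb⟩, hdD⟩

end Main
end OPAux
namespace OPAux
open OP
section Main2
variable {P Q : Type*} [PartialOrder P] [PartialOrder Q]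
variable {A : ℕ → Q → P → Prop}

/-- (E'): for each `n` there is a pair of `A n` wedge-compatible with `T0 A S` and `S`. -/
lemma exists_good_pair (hP : IsOmegaPoset P) (hregP : IsRegular P) (hQ : IsOmegaPoset Q)
    (hA : ∀ n, IsArrow (A n)) (hdec : ∀ n, arrowLe (A (n + 1)) (A n))
    {S : Set P} (hS : S ∈ Spec P) (n : ℕ) :
    ∃ q p, A n q p ∧ T0 A S ⊆ wedgeSet q ∧ S ⊆ wedgeSet p := by
  classical
  by_contra hfail
  have hdata : ∀ x : Q × P, ∃ y m, A n x.1 x.2 →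
      y ∈ S ∧ ((¬ wedge x.2 y) ∨
        (∃ r q1, (¬ wedge x.1 r) ∧ angleRel (A m) q1 y ∧ starBelow q1 r)) := by
    intro x
    by_cases hx : A n x.1 x.2
    · have hns : ¬ (T0 A S ⊆ wedgeSet x.1 ∧ S ⊆ wedgeSet x.2) := by
        rintro ⟨h1, h2⟩
        exact hfail ⟨x.1, x.2, hx, h1, h2⟩
      by_cases hsub : S ⊆ wedgeSet x.2
      · have h1 : ¬ T0 A S ⊆ wedgeSet x.1 := fun h1 => hns ⟨h1, hsub⟩
        obtain ⟨r, hrT0, hrw⟩ := Set.not_subset.1 h1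
        obtain ⟨p', hp'S, q1, ⟨m, hang⟩, hsb⟩ := hrT0
        exact ⟨p', m, fun _ => ⟨hp'S, Or.inr ⟨r, q1, hrw, hang, hsb⟩⟩⟩
      · obtain ⟨s, hsS, hsw⟩ := Set.not_subset.1 hsub
        exact ⟨s, 0, fun _ => ⟨hsS, Or.inl hsw⟩⟩
    · obtain ⟨s0, hs0, -⟩ := spec_meets_level hS 0
      exact ⟨s0, 0, fun hx' => absurd hx' hx⟩
  choose yf mf hyf using hdata
  have hfin : {x : Q × P | A n x.1 x.2}.Finite := (hA n).1
  set F : Finset P := hfin.toFinset.image yf with hF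
  have hFS : ∀ s ∈ F, s ∈ S := by
    intro s hs
    obtain ⟨x, hx, rfl⟩ := Finset.mem_image.1 hs
    exact (hyf x (hfin.mem_toFinset.1 hx)).1
  obtain ⟨a0, ha0S, ha0⟩ := spec_round hregP hS F hFS
  set N := max n (hfin.toFinset.sup mf) with hN
  obtain ⟨qh, ph, hAN, hbwh⟩ := (hA N).2 a0
  obtain ⟨qs, ps, hqs, hps, hAs⟩ := arrowLe_of_le hdec (le_max_left _ _) qh ph hAN
  have hxs : ((qs, ps) : Q × P) ∈ hfin.toFinset := hfin.mem_toFinset.2 hAs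
  obtain ⟨hyS, hcase⟩ := hyf (qs, ps) hAs
  have hyF : yf (qs, ps) ∈ F := Finset.mem_image_of_mem yf hxs
  have hstar : starBelow a0 (yf (qs, ps)) := ha0 _ hyF
  have hwph : wedge ph (yf (qs, ps)) := wedge_of_adj_star hbwh hstar
  rcases hcase with hbad | ⟨r, q1, hnw, hang, hsb⟩
  · exact hbad (wedge_mono_left hwph hps)
  · have hmle : mf (qs, ps) ≤ N := le_max_of_le_right (Finset.le_sup hxs)
    obtain ⟨q2, p2, hq2, hp2, hA2⟩ := arrowLe_of_le hdec hmle qh ph hAN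
    have hbw2 : barwedge (yf (qs, ps)) p2 :=
      barwedge_mono_right (barwedge_of_wedge hP (wedge_symm hwph)) hp2
    have hsb2 : starBelow q2 q1 := hang q2 ⟨p2, hbw2, hA2⟩
    obtain ⟨k1, hk1⟩ := hsb2
    obtain ⟨k2, hk2⟩ := hsb
    obtain ⟨e, hel, hwe⟩ := exists_level_wedge hQ (max k1 k2) qh
    have he1 : e ≤ q1 := starBelowOn_mono hk1 (le_max_left _ _) e hel (wedge_mono_left hwe hq2)
    have he2 : e ≤ r := starBelowOn_mono hk2 (le_max_right _ _) e hel ⟨e, he1, le_rfl⟩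
    obtain ⟨v, hv1, hv2⟩ := hwe
    exact hnw ⟨v, hv1.trans hqs, hv2.trans he2⟩
end Main2
end OPAux
namespace OPAux
open OP
section Main3
variable {P Q : Type*} [PartialOrder P] [PartialOrder Q]
variable {A : ℕ → Q → P → Prop}

/-- (I): under the refiner hypothesis, `T0 A S` is the unique graph-partner of `S`. -/
lemma T0_spec (hP : IsOmegaPoset P) (hregP : IsRegular P) (hQ : IsOmegaPoset Q)
    (hregQ : IsRegular Q) (hA : ∀ n, IsArrow (A n)) (hdec : ∀ n, arrowLe (A (n + 1)) (A n))
    (href : IsRefinerRel (Rrel A)) {S : Set P} (hS : S ∈ Spec P) :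
    T0 A S ∈ Spec Q ∧ ∀ n, ∃ q p, A n q p ∧ T0 A S ⊆ wedgeSet q ∧ S ⊆ wedgeSet p := by
  have hsel : IsSelector (T0 A S) := T0_selector hregQ href hS.1
  have hgood := exists_good_pair hP hregP hQ hA hdec hS (A := A)
  obtain ⟨T', hT'spec, hT'sub⟩ := exists_spec_subset hQ hsel
  have hG' : ∀ n, ∃ q p, A n q p ∧ T' ⊆ wedgeSet q ∧ S ⊆ wedgeSet p := by
    intro n
    obtain ⟨q, p, h1, h2, h3⟩ := hgood n
    exact ⟨q, p, h1, hT'sub.trans h2, h3⟩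
  have hsub2 : T0 A S ⊆ T' := T0_subset hP hT'spec hG'
  have hEq : T0 A S = T' := Set.Subset.antisymm hsub2 hT'sub
  rw [hEq]
  exact ⟨hT'spec, hG'⟩

lemma graph_unique (hP : IsOmegaPoset P) (hregP : IsRegular P) (hQ : IsOmegaPoset Q)
    (hregQ : IsRegular Q) (hA : ∀ n, IsArrow (A n)) (hdec : ∀ n, arrowLe (A (n + 1)) (A n))
    (href : IsRefinerRel (Rrel A)) {S : Set P} (hS : S ∈ Spec P) {T : Set Q} (hT : T ∈ Spec Q)
    (hG : ∀ n, ∃ q p, A n q p ∧ T ⊆ wedgeSet q ∧ S ⊆ wedgeSet p) : T = T0 A S := by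
  have h1 : T0 A S ⊆ T := T0_subset hP hT hG
  exact (hT.2 (T0 A S) h1 (T0_spec hP hregP hQ hregQ hA hdec href hS).1.1).symm

/-- (III): `⊐` is wedge-preserving. -/
lemma rrel_wedgePres (hP : IsOmegaPoset P) (hQ : IsOmegaPoset Q)
    (hA : ∀ n, IsArrow (A n)) (hdec : ∀ n, arrowLe (A (n + 1)) (A n)) :
    WedgePres (Rrel A) := by
  rintro q p p' q' ⟨n, hang⟩ ⟨u, hup, hup'⟩ ⟨n', hang'⟩
  obtain ⟨qh, ph, hAN, hbwh⟩ := (hA (max n n')).2 u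
  obtain ⟨q1, p1, hq1, hp1, hA1⟩ := arrowLe_of_le hdec (le_max_left n n') qh ph hAN
  obtain ⟨q2, p2, hq2, hp2, hA2⟩ := arrowLe_of_le hdec (le_max_right n n') qh ph hAN
  have hb1 : barwedge p p1 :=
    barwedge_symm (barwedge_mono_left (barwedge_mono_right hbwh hup) hp1)
  have hb2 : barwedge p' p2 :=
    barwedge_symm (barwedge_mono_left (barwedge_mono_right hbwh hup') hp2)
  have hsb1 : starBelow q1 q := hang q1 ⟨p1, hb1, hA1⟩
  have hsb2 : starBelow q2 q' := hang' q2 ⟨p2, hb2, hA2⟩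
  obtain ⟨k1, hk1⟩ := hsb1
  obtain ⟨k2, hk2⟩ := hsb2
  obtain ⟨e, hel, hwe⟩ := exists_level_wedge hQ (max k1 k2) qh
  have he1 : e ≤ q := starBelowOn_mono hk1 (le_max_left _ _) e hel (wedge_mono_left hwe hq1)
  have he2 : e ≤ q' := starBelowOn_mono hk2 (le_max_right _ _) e hel (wedge_mono_left hwe hq2)
  exact ⟨e, he1, he2⟩

/-- (IV ⊇): `relStar (starAboveComp ⊐) ≤ ⊐`. -/
lemma rrel_of_relStar (hP : IsOmegaPoset P) (hdec : ∀ n, arrowLe (A (n + 1)) (A n))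
    {q : Q} {p : P} (h : relStar (starAboveComp (Rrel A)) q p) : Rrel A q p := by
  classical
  obtain ⟨C, hC, hCp⟩ := h
  obtain ⟨C', hC'sub, hC'fin, hC'cap⟩ := exists_finite_subcap hP hC
  have hch : ∀ c : P, ∃ m, c ∈ C' → wedge p c →
      ∃ q0, starBelow q0 q ∧ angleRel (A m) q0 c := by
    intro c
    by_cases hc : c ∈ C' ∧ wedge p c
    · obtain ⟨q0, hq0sb, m, hang⟩ := hCp c (hC'sub hc.1) hc.2
      exact ⟨m, fun _ _ => ⟨q0, hq0sb, hang⟩⟩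
    · exact ⟨0, fun h1 h2 => absurd ⟨h1, h2⟩ hc⟩
  choose mf hmf using hch
  refine ⟨hC'fin.toFinset.sup mf, ?_⟩
  rintro q' ⟨p', hbw, hA'⟩
  obtain ⟨c, hcC', hw1, hw2⟩ := hbw C' hC'cap
  obtain ⟨q0, hq0sb, hang⟩ := hmf c hcC' hw1
  obtain ⟨q'', p'', hq'', hp'', hA''⟩ :=
    arrowLe_of_le hdec (Finset.le_sup (hC'fin.mem_toFinset.2 hcC')) q' p' hA'
  have hbwc : barwedge c p'' := barwedge_mono_right (barwedge_of_wedge hP hw2) hp''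
  have hsb : starBelow q'' q0 := hang q'' ⟨p'', hbwc, hA''⟩
  exact starBelow_trans (starBelow_anti hsb hq'') hq0sb

/-- (IV ⊆): `⊐ ≤ relStar (starAboveComp ⊐)` under the refiner hypothesis. -/
lemma relStar_of_rrel (hP : IsOmegaPoset P) (hQ : IsOmegaPoset Q) (hregQ : IsRegular Q)
    (hA : ∀ n, IsArrow (A n)) (hdec : ∀ n, arrowLe (A (n + 1)) (A n))
    (href : IsRefinerRel (Rrel A)) {q : Q} {p : P} (h : Rrel A q p) :
    relStar (starAboveComp (Rrel A)) q p := by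
  classical
  obtain ⟨n, hang⟩ := h
  have hfin : {x : Q × P | A n x.1 x.2}.Finite := (hA n).1
  -- uniform star-below level for all pairs of `A n` adjacent to `p`
  have hunif : ∃ K, ∀ x : Q × P, A n x.1 x.2 → barwedge p x.2 →
      starBelowOn (level Q K) x.1 q := by
    set F' : Finset (Q × Q) :=
      ((hfin.toFinset.filter (fun x => barwedge p x.2)).image (fun x => (x.1, q))) with hF'
    have hFsb : ∀ y ∈ F', starBelow y.1 y.2 := by
      rintro y hy
      obtain ⟨x, hx, rfl⟩ := Finset.mem_image.1 hy
      obtain ⟨hx1, hx2⟩ := Finset.mem_filter.1 hx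
      exact hang x.1 ⟨x.2, hx2, hfin.mem_toFinset.1 hx1⟩
    obtain ⟨K, hK⟩ := uniform_starBelow hFsb
    refine ⟨K, fun x hx hbx => ?_⟩
    have hmem : ((x.1, q) : Q × Q) ∈ F' := Finset.mem_image_of_mem _
      (Finset.mem_filter.2 ⟨hfin.mem_toFinset.2 hx, hbx⟩)
    exact hK _ hmem
  obtain ⟨K, hK⟩ := hunif
  obtain ⟨j, hjK, hj⟩ := hregQ K
  obtain ⟨B, hBcap, hBr⟩ := href (level Q j) (level_isCap j)
  refine ⟨B, hBcap, ?_⟩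
  intro c hcB hwpc
  obtain ⟨d, hdl, hRd⟩ := hBr c hcB
  obtain ⟨w, hwK, hdw⟩ := hj d hdl
  obtain ⟨nc, hangc⟩ := id hRd
  obtain ⟨u, hup, huc⟩ := hwpc
  obtain ⟨qh, ph, hAN, hbwh⟩ := (hA (max n nc)).2 u
  obtain ⟨q1, p1, hq1, hp1, hA1⟩ := arrowLe_of_le hdec (le_max_left n nc) qh ph hAN
  obtain ⟨q2, p2, hq2, hp2, hA2⟩ := arrowLe_of_le hdec (le_max_right n nc) qh ph hAN
  have hb1 : barwedge p p1 :=
    barwedge_symm (barwedge_mono_left (barwedge_mono_right hbwh hup) hp1)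
  have hb2 : barwedge c p2 :=
    barwedge_symm (barwedge_mono_left (barwedge_mono_right hbwh huc) hp2)
  have hsb1 : starBelowOn (level Q K) q1 q := hK (q1, p1) hA1 hb1
  have hsb2 : starBelow q2 d := hangc q2 ⟨p2, hb2, hA2⟩
  obtain ⟨k2, hk2⟩ := hsb2
  obtain ⟨kd, hkd⟩ := id hdw
  obtain ⟨e, hel, hwe⟩ := exists_level_wedge hQ (max k2 kd) qh
  have hed : e ≤ d := starBelowOn_mono hk2 (le_max_left _ _) e hel (wedge_mono_left hwe hq2)
  have hew : e ≤ w := starBelowOn_mono hkd (le_max_right _ _) e hel ⟨e, hed, le_rfl⟩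
  obtain ⟨v, hv1, hv2⟩ := hwe
  have hq1w : wedge q1 w := ⟨v, hv1.trans hq1, hv2.trans hew⟩
  have hwq : w ≤ q := hsb1 w hwK hq1w
  exact ⟨d, starBelow_le hdw hwq, hRd⟩
end Main3
end OPAux
namespace OPAux
open OP
section Main4
variable {P Q : Type*} [PartialOrder P] [PartialOrder Q]
variable {A : ℕ → Q → P → Prop}

/-- (II): if the graph is functional then `⊐` is a refiner. -/
lemma refiner_of_function (hP : IsOmegaPoset P) (hregP : IsRegular P) (hQ : IsOmegaPoset Q)
    (hregQ : IsRegular Q) (hA : ∀ n, IsArrow (A n)) (hdec : ∀ n, arrowLe (A (n + 1)) (A n))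
    (H : ∀ S : SpecT P, ∃! T : SpecT Q, seqGraph A T S) : IsRefinerRel (Rrel A) := by
  classical
  intro D hD
  by_contra hfail
  push_neg at hfail
  set Bad : Set P := {b | ∀ c ∈ D, ¬ Rrel A c b} with hBadDef
  have hBadSel : IsSelector Bad := by
    intro C hC
    obtain ⟨b, hbC, hb⟩ := hfail C hC
    exact ⟨b, hb, hbC⟩
  obtain ⟨S, hSspec, hSsub⟩ := exists_spec_subset hP hBadSel
  obtain ⟨T, hTG, hTuniq⟩ := H ⟨S, hSspec⟩
  obtain ⟨k, hk⟩ := cap_star hregQ hD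
  obtain ⟨t0, ht0T, ht0l⟩ := spec_meets_level T.2 k
  obtain ⟨d0, hd0D, hsb0⟩ := hk t0 ht0l
  by_cases hV : ∀ n, ∃ x : Q × P, A n x.1 x.2 ∧ S ⊆ wedgeSet x.2 ∧ ¬ starBelow x.1 d0
  · -- bad pairs persist at every stage: build a second graph-partner, contradiction
    set V : ℕ → Set (Q × P) := fun n =>
      {x | A n x.1 x.2 ∧ S ⊆ wedgeSet x.2 ∧ ¬ starBelow x.1 d0} with hVdef
    have hVfin : ∀ n, (V n).Finite := fun n => ((hA n).1).subset (fun x hx => hx.1)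
    have hVne : ∀ n, (V n).Nonempty := by
      intro n; obtain ⟨x, hx⟩ := hV n; exact ⟨x, hx⟩
    have hVstep : ∀ n, ∀ x ∈ V (n + 1), ∃ y ∈ V n, x.1 ≤ y.1 ∧ x.2 ≤ y.2 := by
      rintro n x ⟨hx1, hx2, hx3⟩
      obtain ⟨q', p', hq', hp', hA'⟩ := hdec n x.1 x.2 hx1
      refine ⟨(q', p'), ⟨hA', ?_, ?_⟩, hq', hp'⟩
      · exact fun s hs => wedge_mono_left (hx2 hs) hp'
      · exact fun hsb => hx3 (starBelow_anti hsb hq')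
    obtain ⟨g, hgV, hgr⟩ := koenig V hVfin hVne (fun x y => x.1 ≤ y.1 ∧ x.2 ≤ y.2) hVstep
    have hmono : ∀ {m n : ℕ}, n ≤ m → (g m).1 ≤ (g n).1 := by
      intro m n h
      induction h with
      | refl => exact le_rfl
      | @step k h ih => exact (hgr k).1.trans ih
    obtain ⟨kw, hkw⟩ := hsb0
    -- far elements at each deep level, compatible with the whole thread
    set W : ℕ → Set Q := fun m =>
      {e | e ∈ level Q (kw + m) ∧ (∀ n, wedge (g n).1 e) ∧ ¬ e ≤ d0} with hWdef
    have hWne : ∀ m, (W m).Nonempty := by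
      intro m
      have hΦ : ∀ n, ∃ e ∈ level Q (kw + m), wedge (g n).1 e ∧ ¬ e ≤ d0 := by
        intro n
        by_contra hco
        push_neg at hco
        exact (hgV n).2.2 ⟨kw + m, fun e he hwe => hco e he hwe⟩
      obtain ⟨e, hel, he⟩ := pigeonhole_cofinal (hQ.1 (kw + m)) hΦ
      refine ⟨e, hel, fun n => ?_, ?_⟩
      · obtain ⟨n', hn', hΦ'⟩ := he n
        obtain ⟨v, hv1, hv2⟩ := hΦ'.1
        exact ⟨v, hv1.trans (hmono hn'), hv2⟩
      · obtain ⟨n', -, hΦ'⟩ := he 0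
        exact hΦ'.2
    have hWfin : ∀ m, (W m).Finite := fun m => (hQ.1 (kw + m)).subset (fun e he => he.1)
    have hWstep : ∀ m, ∀ e ∈ W (m + 1), ∃ f ∈ W m, e ≤ f := by
      rintro m e ⟨hel, hew, hed⟩
      obtain ⟨f, hf, hef⟩ := level_succ_refines (kw + m) e hel
      refine ⟨f, ⟨hf, fun n => wedge_mono_right (hew n) hef, fun h => hed (hef.trans h)⟩, hef⟩
    obtain ⟨ge, hgeW, hger⟩ := koenig W hWfin hWne (fun e f => e ≤ f) hWstep
    set T2 : Set Q := {x | ∃ m, ge m ≤ x} with hT2def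
    have hT2sel : IsSelector T2 := by
      intro C hC
      obtain ⟨j, hj⟩ := hC
      obtain ⟨b, hb, hgeb⟩ := level_refines (Nat.le_add_left j kw) _ (hgeW j).1
      obtain ⟨c, hcC, hbc⟩ := hj b hb
      exact ⟨c, ⟨j, hgeb.trans hbc⟩, hcC⟩
    obtain ⟨T3, hT3spec, hT3sub⟩ := exists_spec_subset hQ hT2sel
    have hG3 : seqGraph A ⟨T3, hT3spec⟩ ⟨S, hSspec⟩ := by
      intro n
      refine ⟨(g n).1, (g n).2, (hgV n).1, ?_, (hgV n).2.1⟩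
      intro x hx
      obtain ⟨m, hm⟩ := hT3sub hx
      obtain ⟨v, hv1, hv2⟩ := (hgeW m).2.1 n
      exact ⟨v, hv1, hv2.trans hm⟩
    have hEqT : (⟨T3, hT3spec⟩ : SpecT Q) = T := hTuniq _ hG3
    have hT3T : T3 = T.1 := congrArg Subtype.val hEqT
    have ht0T3 : t0 ∈ T3 := by rw [hT3T]; exact ht0T
    obtain ⟨m, hm⟩ := hT3sub ht0T3
    have hwt0 : wedge t0 (ge m) := ⟨ge m, hm, le_rfl⟩
    have hled0 : ge m ≤ d0 :=
      starBelowOn_mono hkw (Nat.le_add_right kw m) _ (hgeW m).1 hwt0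
    exact (hgeW m).2.2 hled0
  · -- eventually all full pairs star-shrink below d0: get a certificate in Bad
    push_neg at hV
    obtain ⟨n, hn⟩ := hV
    have hdata : ∀ x : Q × P, ∃ y, A n x.1 x.2 →
        y ∈ S ∧ (S ⊆ wedgeSet x.2 ∨ ¬ wedge x.2 y) := by
      intro x
      by_cases hx : A n x.1 x.2
      · by_cases hsub : S ⊆ wedgeSet x.2
        · obtain ⟨s0, hs0, -⟩ := spec_meets_level hSspec 0
          exact ⟨s0, fun _ => ⟨hs0, Or.inl hsub⟩⟩
        · obtain ⟨s, hsS, hsw⟩ := Set.not_subset.1 hsub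
          exact ⟨s, fun _ => ⟨hsS, Or.inr hsw⟩⟩
      · obtain ⟨s0, hs0, -⟩ := spec_meets_level hSspec 0
        exact ⟨s0, fun hx' => absurd hx' hx⟩
    choose yf hyf using hdata
    have hfin : {x : Q × P | A n x.1 x.2}.Finite := (hA n).1
    set F : Finset P := hfin.toFinset.image yf with hF
    have hFS : ∀ s ∈ F, s ∈ S := by
      intro s hs
      obtain ⟨x, hx, rfl⟩ := Finset.mem_image.1 hs
      exact (hyf x (hfin.mem_toFinset.1 hx)).1
    obtain ⟨a0, ha0S, ha0⟩ := spec_round hregP hSspec F hFS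
    have hang : angleRel (A n) d0 a0 := by
      rintro q' ⟨p', hbw, hA'⟩
      have hyFm : yf (q', p') ∈ F :=
        Finset.mem_image_of_mem yf (hfin.mem_toFinset.2 hA')
      have hsub : S ⊆ wedgeSet p' := by
        rcases (hyf (q', p') hA').2 with h | h
        · exact h
        · exact absurd (wedge_of_adj_star (barwedge_symm hbw) (ha0 _ hyFm)) h
      exact hn (q', p') hA' hsub
    exact hSsub ha0S d0 hd0D ⟨n, hang⟩
end Main4
end OPAux

open OP in
/-- For a thin arrow-sequence, `⊐ = ⋃ₙ ⟨←ₙ` is a strong refiner whose associated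
continuous map is `φ = ⋂ₙ (←ₙ)̄_S`; `⊐` is a refiner iff `φ` is a function, and then
`φ = S_⊐` is continuous. -/
theorem stmt10 {P Q : Type*} [PartialOrder P] [PartialOrder Q]
    (hP : IsOmegaPoset P) (hregP : IsRegular P) (hQ : IsOmegaPoset Q) (hregQ : IsRegular Q)
    (A : ℕ → Q → P → Prop) (hA : ∀ n, IsArrow (A n)) (hdec : ∀ n, arrowLe (A (n + 1)) (A n)) :
    (IsRefinerRel (fun q p => ∃ n, angleRel (A n) q p) ↔
      ∀ S : SpecT P, ∃! T : SpecT Q, seqGraph A T S) ∧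
    (IsRefinerRel (fun q p => ∃ n, angleRel (A n) q p) →
      IsStrongRefiner (fun q p => ∃ n, angleRel (A n) q p) ∧
      ∃ φ : SpecT P → SpecT Q, Continuous φ ∧
        specMapOf (fun q p => ∃ n, angleRel (A n) q p) φ ∧
        ∀ (S : SpecT P) (T : SpecT Q), seqGraph A T S ↔ T = φ S) := by
  have hiff1 : IsRefinerRel (fun q p => ∃ n, angleRel (A n) q p) →
      ∀ S : SpecT P, ∃! T : SpecT Q, seqGraph A T S := by
    intro href S
    obtain ⟨hspec, hG⟩ := OPAux.T0_spec hP hregP hQ hregQ hA hdec href S.2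
    refine ⟨⟨OPAux.T0 A S.1, hspec⟩, hG, ?_⟩
    intro T hT
    exact Subtype.ext (OPAux.graph_unique hP hregP hQ hregQ hA hdec href S.2 T.2 hT)
  refine ⟨⟨hiff1, OPAux.refiner_of_function hP hregP hQ hregQ hA hdec⟩, ?_⟩
  intro href
  refine ⟨⟨href, OPAux.rrel_wedgePres hP hQ hA hdec, fun q p =>
    ⟨fun h => OPAux.relStar_of_rrel hP hQ hregQ hA hdec href h,
     fun h => OPAux.rrel_of_relStar hP hdec h⟩⟩, ?_⟩
  refine ⟨fun S => ⟨OPAux.T0 A S.1,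
    (OPAux.T0_spec hP hregP hQ hregQ hA hdec href S.2).1⟩, ?_, ?_, ?_⟩
  · apply continuous_generateFrom_iff.2
    rintro U ⟨r, rfl⟩
    have hpre : (fun S : SpecT P => (⟨OPAux.T0 A S.1,
        (OPAux.T0_spec hP hregP hQ hregQ hA hdec href S.2).1⟩ : SpecT Q)) ⁻¹'
          {T : SpecT Q | r ∈ T.1} =
        ⋃ (x : Q × P) (_ : OPAux.Rrel A x.1 x.2 ∧ starBelow x.1 r),
          {S : SpecT P | x.2 ∈ S.1} := by
      ext S
      simp only [Set.mem_preimage, Set.mem_iUnion, Set.mem_setOf_eq]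
      constructor
      · rintro ⟨p, hp, q, hR, hsb⟩
        exact ⟨(q, p), ⟨hR, hsb⟩, hp⟩
      · rintro ⟨⟨q, p⟩, ⟨hR, hsb⟩, hp⟩
        exact ⟨p, hp, q, hR, hsb⟩
    refine (congrArg IsOpen hpre).mpr ?_
    exact isOpen_iUnion fun x => isOpen_iUnion fun _ =>
      TopologicalSpace.isOpen_generateFrom_of_mem ⟨x.2, rfl⟩
  · intro S; rfl
  · intro S T
    constructor
    · intro hG
      exact Subtype.ext (OPAux.graph_unique hP hregP hQ hregQ hA hdec href S.2 T.2 hG)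
    · rintro rfl
      exact (OPAux.T0_spec hP hregP hQ hregQ hA hdec href S.2).2
end
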